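/- arXiv:2403.18748 — 5 statements merged into one kernel-verified Lean document; each statement's English description precedes it below -/
import Mathlib

section
/- Let A be an injective bounded linear operator on a complex Hilbert space H whose point spectrum σ_p(A) is nonempty, and suppose the set of eigenvectors of A spans a dense subspace of H. Then every extended eigenvalue λ of A can be written as λ = α/β for some eigenvalues α, β ∈ σ_p(A). -/
def extEig {H : Type*} [NormedAddCommGroup H] [NormedSpace ℂ H]
    (A : H →L[ℂ] H) (l : ℂ) : Prop :=
  ∃ X : H →L[ℂ] H, X ≠ 0 ∧ A.comp X = l • (X.comp A)

theorem stmt4 {H : Type*} [NormedAddCommGroup H] [InnerProductSpace ℂ H] [CompleteSpace H]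
    (A : H →L[ℂ] H) (hinj : Function.Injective A)
    (hne : ∃ μ : ℂ, ∃ x : H, x ≠ 0 ∧ A x = μ • x)
    (hdense : Dense (↑(Submodule.span ℂ {x : H | x ≠ 0 ∧ ∃ μ : ℂ, A x = μ • x}) : Set H)) :
    ∀ l : ℂ, extEig A l →
      ∃ a b : ℂ, (∃ x : H, x ≠ 0 ∧ A x = a • x) ∧ (∃ x : H, x ≠ 0 ∧ A x = b • x) ∧
        l = a / b := by
  rintro l ⟨X, hX0, hcomm⟩
  set S : Set H := {x : H | x ≠ 0 ∧ ∃ μ : ℂ, A x = μ • x} with hS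
  by_cases h : ∀ x ∈ S, X x = 0
  · exfalso
    apply hX0
    have hker : Submodule.span ℂ S ≤ X.ker := by
      rw [Submodule.span_le]; intro x hx; exact h x hx
    have hcl : closure (↑(Submodule.span ℂ S) : Set H) ⊆ (X.ker : Set H) :=
      closure_minimal hker (ContinuousLinearMap.isClosed_ker X)
    ext y
    have hy : y ∈ closure (↑(Submodule.span ℂ S) : Set H) := by
      rw [hdense.closure_eq]; trivial
    simpa using hcl hy
  · push_neg at h
    obtain ⟨x, hxS, hXx⟩ := h
    obtain ⟨hx0, μ, hμ⟩ := hxS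
    have hμ0 : μ ≠ 0 := by
      rintro rfl
      apply hx0
      apply hinj
      simp [hμ]
    have key : A (X x) = (l * μ) • X x := by
      have h1 := congrArg (fun T : H →L[ℂ] H => T x) hcomm
      simp only [ContinuousLinearMap.comp_apply, ContinuousLinearMap.smul_apply] at h1
      rw [hμ, map_smul] at h1
      rw [h1, smul_smul]
    refine ⟨l * μ, μ, ⟨X x, hXx, key⟩, ⟨x, hx0, hμ⟩, ?_⟩
    field_simp
end

section
/- Let φ(z) = w z + b with 0 < |w| < 1 and b ∈ ℂ, inducing a bounded composition operator C_φ on the Fock space F²_α. The point spectrum of C_φ is { w^n : n ∈ ℕ₀ }, each eigenvalue has multiplicity one, and an eigenfunction for w^n is h(z)^n where h(z) = z − b/(1−w) (the fixed point translate), satisfying C_φ h^n = w^n h^n. -/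
open MeasureTheory

def FockSpace (α : ℝ) : Set (ℂ → ℂ) :=
  {f | Differentiable ℂ f ∧
    Integrable (fun z : ℂ => ‖f z‖ ^ 2 * Real.exp (-α * ‖z‖ ^ 2))}

private lemma fock_aux_deriv {w b μ : ℂ} (hw : w ≠ 1) (H : ℂ → ℂ) (hH : Differentiable ℂ H)
    (heq : ∀ z, H (w * z + b) = μ * H z) (m : ℕ) :
    (w ^ m - μ) * iteratedDeriv m H (b / (1 - w)) = 0 := by
  set c : ℂ := b / (1 - w) with hc
  have h1w : (1 : ℂ) - w ≠ 0 := sub_ne_zero.mpr (Ne.symm hw)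
  have hfix : w * c + b = c := by
    have h2 : c * (1 - w) = b := div_mul_cancel₀ b h1w
    linear_combination (-1 : ℂ) * h2
  have hcontG : ContDiff ℂ m (fun y => H (y + b)) :=
    (hH.comp (differentiable_id.add_const b)).contDiff
  have hL : iteratedDeriv m (fun z => H (w * z + b)) c
      = w ^ m * iteratedDeriv m H (w * c + b) := by
    have e1 : (fun z => H (w * z + b)) = fun z => (fun y => H (y + b)) (w * z) := rfl
    rw [e1, iteratedDeriv_comp_const_mul hcontG w, iteratedDeriv_comp_add_const]
  have hR : iteratedDeriv m (fun z => μ * H z) c = μ * iteratedDeriv m H c := by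
    have : (fun z => μ * H z) = μ • H := rfl
    rw [this, iteratedDeriv_eq_iteratedFDeriv, iteratedDeriv_eq_iteratedFDeriv]
    rw [iteratedFDeriv_const_smul_apply (hH.contDiff.contDiffAt)]
    simp
  have := funext heq
  have h2 : iteratedDeriv m (fun z => H (w * z + b)) c
      = iteratedDeriv m (fun z => μ * H z) c := by rw [this]
  rw [hL, hR, hfix] at h2
  ring_nf
  ring_nf at h2
  linear_combination h2

private lemma fock_aux_taylor {H : ℂ → ℂ} (hH : Differentiable ℂ H) (c : ℂ) (n : ℕ)
    (hd : ∀ m : ℕ, m ≠ n → iteratedDeriv m H c = 0) (z : ℂ) :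
    H z = ((Nat.factorial n : ℂ))⁻¹ * iteratedDeriv n H c * (z - c) ^ n := by
  have := Complex.taylorSeries_eq_of_entire' c z hH
  rw [← this]
  rw [tsum_eq_single n]
  intro m hm
  rw [hd m hm]
  ring

private lemma fock_gauss_int {a : ℝ} (ha : 0 < a) :
    Integrable (fun z : ℂ => Real.exp (-a * ‖z‖ ^ 2)) := by
  have h := GaussianFourier.integrable_cexp_neg_mul_sq_norm_add (V := ℂ) (b := (a : ℂ))
    (by simpa using ha) 0 0
  have h2 := h.norm
  refine h2.congr ?_
  filter_upwards with z
  rw [Complex.norm_exp]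
  norm_num
  left
  norm_cast

private lemma fock_aux_int (α : ℝ) (hα : 0 < α) (c : ℂ) (n : ℕ) :
    Integrable (fun z : ℂ => ‖(z - c) ^ n‖ ^ 2 * Real.exp (-α * ‖z‖ ^ 2)) := by
  set C : ℝ := ((2 * n).factorial : ℝ) * Real.exp (‖c‖ + 1 / (2 * α)) with hC
  have hmaj : Integrable (fun z : ℂ => C * Real.exp (-(α / 2) * ‖z‖ ^ 2)) :=
    (fock_gauss_int (by positivity)).const_mul C
  refine hmaj.mono' ?_ ?_
  · apply Continuous.aestronglyMeasurable
    continuity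
  · filter_upwards with z
    have h0 : (0:ℝ) ≤ ‖(z - c) ^ n‖ ^ 2 * Real.exp (-α * ‖z‖ ^ 2) := by positivity
    rw [Real.norm_of_nonneg h0]
    have e1 : ‖(z - c) ^ n‖ ^ 2 = ‖z - c‖ ^ (2 * n) := by
      rw [norm_pow, ← pow_mul, mul_comm n 2]
    rw [e1]
    have h1 : ‖z - c‖ ^ (2 * n) ≤ ((2 * n).factorial : ℝ) * Real.exp (‖z - c‖) := by
      have := Real.pow_div_factorial_le_exp ‖z - c‖ (norm_nonneg (z - c)) (2 * n)
      have hf : (0:ℝ) < ((2 * n).factorial : ℝ) := by positivity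
      rw [div_le_iff₀ hf] at this
      linarith [this]
    have h2 : Real.exp (‖z - c‖) ≤ Real.exp (‖z‖ + ‖c‖) :=
      Real.exp_le_exp.mpr (norm_sub_le z c)
    have h3 : ‖z‖ ≤ α / 2 * ‖z‖ ^ 2 + 1 / (2 * α) := by
      have hu : 2 * α * (1 / (2 * α)) = 1 := by field_simp
      nlinarith [sq_nonneg (α * ‖z‖ - 1), hα, hu, norm_nonneg z]
    calc ‖z - c‖ ^ (2 * n) * Real.exp (-α * ‖z‖ ^ 2)
        ≤ ((2 * n).factorial : ℝ) * Real.exp (‖z‖ + ‖c‖) * Real.exp (-α * ‖z‖ ^ 2) := by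
          apply mul_le_mul_of_nonneg_right (le_trans h1 (by
            exact mul_le_mul_of_nonneg_left h2 (by positivity))) (Real.exp_nonneg _)
      _ ≤ C * Real.exp (-(α / 2) * ‖z‖ ^ 2) := by
          rw [hC, mul_assoc, mul_assoc, ← Real.exp_add, ← Real.exp_add]
          apply mul_le_mul_of_nonneg_left _ (by positivity)
          apply Real.exp_le_exp.mpr
          nlinarith [h3]

/-- For `φ(z) = wz + b` with `0 < |w| < 1` on the Fock space: the point
spectrum of `C_φ` is `{wⁿ : n ∈ ℕ}`, each eigenvalue has multiplicity one, and
`h(z)ⁿ = (z - b/(1-w))ⁿ` is an eigenfunction for `wⁿ`. -/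
theorem stmt9 (α : ℝ) (hα : 0 < α) (w b : ℂ) (hw0 : 0 < ‖w‖) (hw1 : ‖w‖ < 1)
    {F : Type*} [NormedAddCommGroup F] [InnerProductSpace ℂ F] [CompleteSpace F]
    (T : F →ₗ[ℂ] (ℂ → ℂ)) (hinj : Function.Injective T)
    (hrange : Set.range T = FockSpace α)
    (hnorm : ∀ f : F, ‖f‖ ^ 2 =
      (α / Real.pi) * ∫ z : ℂ, ‖T f z‖ ^ 2 * Real.exp (-α * ‖z‖ ^ 2))
    (Cφ : F →L[ℂ] F) (hCφ : ∀ (f : F) (z : ℂ), T (Cφ f) z = T f (w * z + b)) :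
    (∀ n : ℕ, ∃ en : F, (∀ z : ℂ, T en z = (z - b / (1 - w)) ^ n) ∧
        Cφ en = (w ^ n : ℂ) • en) ∧
    (∀ μ : ℂ, (∃ f : F, f ≠ 0 ∧ Cφ f = μ • f) ↔ ∃ n : ℕ, μ = w ^ n) ∧
    (∀ (μ : ℂ) (f g : F), f ≠ 0 → g ≠ 0 → Cφ f = μ • f → Cφ g = μ • g →
      ∃ c : ℂ, f = c • g) := by
  set c : ℂ := b / (1 - w) with hcdef
  have hwne1 : w ≠ 1 := by
    intro h; rw [h] at hw1; simp at hw1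
  have h1w : (1 : ℂ) - w ≠ 0 := sub_ne_zero.mpr (Ne.symm hwne1)
  have hfix : w * c + b = c := by
    have h2 : c * (1 - w) = b := div_mul_cancel₀ b h1w
    linear_combination (-1 : ℂ) * h2
  have hmemFock : ∀ f : F, T f ∈ FockSpace α := by
    intro f; rw [← hrange]; exact Set.mem_range_self f
  have hdiff : ∀ f : F, Differentiable ℂ (T f) := fun f => (hmemFock f).1
  -- derivative relation for eigenfunctions
  have hder : ∀ (μ : ℂ) (f : F), Cφ f = μ • f →
      ∀ m : ℕ, (w ^ m - μ) * iteratedDeriv m (T f) c = 0 := by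
    intro μ f hf m
    apply fock_aux_deriv hwne1 (T f) (hdiff f)
    intro z
    have h1 := hCφ f z
    rw [hf] at h1
    rw [← h1, _root_.map_smul]
    simp
  -- eigenvalues distinct
  have hpow : ∀ m n : ℕ, w ^ m = w ^ n → m = n := by
    intro m n h
    have : ‖w‖ ^ m = ‖w‖ ^ n := by rw [← norm_pow, ← norm_pow, h]
    exact pow_right_injective₀ hw0 (ne_of_lt hw1) this
  -- Part 1
  have part1 : ∀ n : ℕ, ∃ en : F, (∀ z : ℂ, T en z = (z - c) ^ n) ∧
      Cφ en = (w ^ n : ℂ) • en := by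
    intro n
    have hmem : (fun z : ℂ => (z - c) ^ n) ∈ FockSpace α := by
      constructor
      · exact (differentiable_id.sub_const c).pow n
      · exact fock_aux_int α hα c n
    rw [← hrange] at hmem
    obtain ⟨en, hen⟩ := hmem
    refine ⟨en, fun z => by rw [hen], ?_⟩
    apply hinj
    funext z
    have hz : w * z + b - c = w * (z - c) := by linear_combination hfix
    rw [hCφ en z, _root_.map_smul, hen]
    simp only [Pi.smul_apply, smul_eq_mul]
    rw [hz, mul_pow]
  refine ⟨part1, ?_, ?_⟩
  · -- Part 2
    intro μ
    constructor
    · rintro ⟨f, hf0, hf⟩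
      by_contra hcon
      push_neg at hcon
      have hzero : ∀ m : ℕ, iteratedDeriv m (T f) c = 0 := by
        intro m
        have := hder μ f hf m
        have hne : w ^ m - μ ≠ 0 := sub_ne_zero.mpr (fun h => hcon m h.symm)
        exact (mul_eq_zero.mp this).resolve_left hne
      apply hf0
      apply hinj
      funext z
      have := fock_aux_taylor (hdiff f) c 0 (fun m _ => hzero m) z
      rw [this, hzero 0]
      simp
    · rintro ⟨n, rfl⟩
      obtain ⟨en, hT, hC⟩ := part1 n
      refine ⟨en, ?_, hC⟩
      intro h
      have := hT (c + 1)
      rw [h] at this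
      simp at this
  · -- Part 3
    intro μ f g hf0 hg0 hf hg
    -- μ = w ^ n for some n
    have hμ : ∃ n : ℕ, μ = w ^ n := by
      by_contra hcon
      push_neg at hcon
      apply hf0
      apply hinj
      funext z
      have hzero : ∀ m : ℕ, iteratedDeriv m (T f) c = 0 := by
        intro m
        have := hder μ f hf m
        have hne : w ^ m - μ ≠ 0 := sub_ne_zero.mpr (fun h => hcon m h.symm)
        exact (mul_eq_zero.mp this).resolve_left hne
      have := fock_aux_taylor (hdiff f) c 0 (fun m _ => hzero m) z
      rw [this, hzero 0]
      simp
    obtain ⟨n, rfl⟩ := hμ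
    have hconc : ∀ h : F, Cφ h = (w ^ n : ℂ) • h → ∀ z : ℂ,
        T h z = ((Nat.factorial n : ℂ))⁻¹ * iteratedDeriv n (T h) c * (z - c) ^ n := by
      intro h hh
      apply fock_aux_taylor (hdiff h) c n
      intro m hm
      have := hder _ h hh m
      have hne : w ^ m - w ^ n ≠ 0 := sub_ne_zero.mpr (fun he => hm (hpow m n he))
      exact (mul_eq_zero.mp this).resolve_left hne
    have hgne : iteratedDeriv n (T g) c ≠ 0 := by
      intro h
      apply hg0
      apply hinj
      funext z
      rw [hconc g hg z, h]
      simp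
    refine ⟨iteratedDeriv n (T f) c / iteratedDeriv n (T g) c, ?_⟩
    apply hinj
    funext z
    rw [_root_.map_smul]
    simp only [Pi.smul_apply, smul_eq_mul]
    rw [hconc f hf z, hconc g hg z, div_mul_eq_mul_div, eq_div_iff hgne]
    ring
end

section
/- Let φ(z) = a(z − c) + c be a loxodromic or third-kind hyperbolic nonautomorphic self-map of the unit disk (with c ∈ 𝔻 a fixed point and 0 < |a| < 1, and |a| + |1−a||c| ≤ 1 ensuring φ(𝔻) ⊆ 𝔻). Then the composition operator C_φ on the Bergman space L²_a(𝔻) has point spectrum σ_p(C_φ) = { a^n : n ∈ ℕ₀ }, each eigenvalue of multiplicity one with eigenfunction σ^n where σ(z) = z − c, satisfying C_φ σ^n = a^n σ^n. -/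
open MeasureTheory Metric

/-- The Bergman space `L²_a(𝔻)`: holomorphic functions on the unit disk that
are square-integrable with respect to area measure. -/
def BergmanSpace : Set (ℂ → ℂ) :=
  {f | DifferentiableOn ℂ f (ball 0 1) ∧
    IntegrableOn (fun z : ℂ => ‖f z‖ ^ 2) (ball 0 1)}

open FormalMultilinearSeries in
lemma coeff_unique {u v : ℕ → ℂ} {g : ℂ → ℂ}
    (hu : ∀ᶠ z in nhds (0:ℂ), HasSum (fun n => z^n • u n) (g z))
    (hv : ∀ᶠ z in nhds (0:ℂ), HasSum (fun n => z^n • v n) (g z)) : u = v := by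
  have hcu : ∀ w : ℕ → ℂ, (FormalMultilinearSeries.ofScalars ℂ w).coeff = w := by
    intro w; funext n
    simp [FormalMultilinearSeries.ofScalars, FormalMultilinearSeries.coeff, List.prod_ofFn]
  have h1 : HasFPowerSeriesAt g (FormalMultilinearSeries.ofScalars ℂ u) 0 := by
    rw [hasFPowerSeriesAt_iff, hcu]; simpa using hu
  have h2 : HasFPowerSeriesAt g (FormalMultilinearSeries.ofScalars ℂ v) 0 := by
    rw [hasFPowerSeriesAt_iff, hcu]; simpa using hv
  have := h1.eq_formalMultilinearSeries h2
  exact FormalMultilinearSeries.ofScalars_series_injective ℂ ℂ this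

lemma key_lemma (a c μ : ℂ) (hc : c ∈ ball (0:ℂ) 1) (ha0 : 0 < ‖a‖) (ha1 : ‖a‖ < 1)
    (G : ℂ → ℂ) (hG : DifferentiableOn ℂ G (ball 0 1))
    (heq : ∀ z ∈ ball (0:ℂ) 1, G (a*(z-c)+c) = μ * G z)
    (hne : ∃ z ∈ ball (0:ℂ) 1, G z ≠ 0) :
    ∃ n : ℕ, μ = a^n ∧ ∃ C : ℂ, C ≠ 0 ∧ ∀ z ∈ ball (0:ℂ) 1, G z = C * (z-c)^n := by
  have hAn : AnalyticOnNhd ℂ G (ball 0 1) := hG.analyticOnNhd isOpen_ball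
  obtain ⟨p, hp⟩ := hAn c hc
  have h1 : ∀ᶠ z in nhds (0:ℂ), HasSum (fun n => z^n • p.coeff n) (G (c + z)) :=
    hasFPowerSeriesAt_iff.1 hp
  -- eventually c + z ∈ ball
  have hcn : ‖c‖ < 1 := by simpa [mem_ball, dist_eq_norm] using hc
  have hball : ∀ᶠ z in nhds (0:ℂ), c + z ∈ ball (0:ℂ) 1 := by
    filter_upwards [Metric.ball_mem_nhds (0:ℂ) (by linarith : (0:ℝ) < 1 - ‖c‖)] with z hz
    simp only [mem_ball, dist_eq_norm, sub_zero] at hz ⊢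
    calc ‖c + z‖ ≤ ‖c‖ + ‖z‖ := by simpa using norm_add_le c z
      _ < 1 := by linarith
  have hmul : Filter.Tendsto (fun z : ℂ => a * z) (nhds 0) (nhds 0) := by
    simpa using (continuous_mul_left a).tendsto 0
  -- series for z ↦ G (c + a z)
  have h2 : ∀ᶠ z in nhds (0:ℂ), HasSum (fun n => z^n • (a^n * p.coeff n)) (G (c + a*z)) := by
    filter_upwards [hmul.eventually h1] with z hz
    have : (fun n => (a*z)^n • p.coeff n) = fun n => z^n • (a^n * p.coeff n) := by
      funext n; rw [mul_pow, smul_eq_mul, smul_eq_mul]; ring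
    rwa [this] at hz
  have h3 : ∀ᶠ z in nhds (0:ℂ), HasSum (fun n => z^n • (μ * p.coeff n)) (G (c + a*z)) := by
    filter_upwards [h1, hball] with z hz hb
    have h4 : G (c + a * z) = μ * G (c + z) := by
      have := heq (c + z) hb
      simpa [add_sub_cancel_left, mul_comm, add_comm] using this
    rw [h4]
    have := hz.const_smul μ
    simpa [smul_eq_mul, mul_left_comm] using this
  have hco : ∀ n, a^n * p.coeff n = μ * p.coeff n :=
    fun n => congrFun (coeff_unique h2 h3) n
  -- p has a nonzero coefficient
  have hpne : ∃ n, p.coeff n ≠ 0 := by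
    by_contra h
    push_neg at h
    have hp0 : p = 0 := by
      ext1 n
      exact (FormalMultilinearSeries.coeff_eq_zero.1 (h n))
    have hev : ∀ᶠ z in nhds c, G z = 0 := (hp0 ▸ hp).eventually_eq_zero
    obtain ⟨z, hz, hGz⟩ := hne
    exact hGz (hAn.eqOn_zero_of_preconnected_of_eventuallyEq_zero
      (convex_ball 0 1).isPreconnected hc hev hz)
  obtain ⟨n, hn⟩ := hpne
  have hμ : μ = a^n := by
    have := hco n
    exact (mul_right_cancel₀ hn this).symm
  -- pow injectivity
  have hpowinj : ∀ k, k ≠ n → a^k ≠ a^n := by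
    intro k hk h
    have : ‖a‖^k = ‖a‖^n := by rw [← norm_pow, ← norm_pow, h]
    exact hk ((pow_right_strictAnti₀ ha0 ha1).injective this)
  have hzero : ∀ k, k ≠ n → p.coeff k = 0 := by
    intro k hk
    have := hco k
    rw [hμ] at this
    by_contra h
    exact hpowinj k hk (mul_right_cancel₀ h this)
  -- G eventually equals monomial near c
  have hev : ∀ᶠ z in nhds c, G z = p.coeff n * (z - c)^n := by
    filter_upwards [hasFPowerSeriesAt_iff'.1 hp] with z hz
    have hs : HasSum (fun k => (z - c)^k • p.coeff k) ((z-c)^n • p.coeff n) := by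
      apply hasSum_single
      intro k hk
      rw [hzero k hk, smul_zero]
    rw [hz.unique hs, smul_eq_mul, mul_comm]
  refine ⟨n, hμ, p.coeff n, hn, ?_⟩
  have hDan : AnalyticOnNhd ℂ (fun z : ℂ => G z - p.coeff n * (z - c)^n) (ball 0 1) :=
    hAn.sub (((((differentiable_id.sub_const c).pow n).const_mul
      (p.coeff n)).differentiableOn.analyticOnNhd isOpen_ball))
  have hev0 : ∀ᶠ z in nhds c, G z - p.coeff n * (z - c)^n = 0 := by
    filter_upwards [hev] with z hz; rw [hz, sub_self]
  have := hDan.eqOn_zero_of_preconnected_of_eventuallyEq_zero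
    (convex_ball 0 1).isPreconnected hc hev0
  intro z hz
  have := this hz
  simpa [sub_eq_zero] using this

/-- For a loxodromic or third-kind hyperbolic nonautomorphic map
`φ(z) = a(z - c) + c` of the disk, the point spectrum of `C_φ` on the Bergman
space is `{aⁿ : n ∈ ℕ}`, each eigenvalue has multiplicity one, and `(z - c)ⁿ`
is an eigenfunction for `aⁿ`. -/
theorem stmt14 (a c : ℂ) (hc : c ∈ ball (0:ℂ) 1) (ha0 : 0 < ‖a‖) (ha1 : ‖a‖ < 1)
    (hmap : ‖a‖ + ‖1 - a‖ * ‖c‖ ≤ 1)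
    {F : Type*} [NormedAddCommGroup F] [InnerProductSpace ℂ F] [CompleteSpace F]
    (T : F →ₗ[ℂ] (ℂ → ℂ))
    (hinj : ∀ f g : F, (∀ z ∈ ball (0:ℂ) 1, T f z = T g z) → f = g)
    (hmem : ∀ f : F, T f ∈ BergmanSpace)
    (hsur : ∀ g ∈ BergmanSpace, ∃ f : F, ∀ z ∈ ball (0:ℂ) 1, T f z = g z)
    (hnorm : ∀ f : F, ‖f‖ ^ 2 = ∫ z in ball (0:ℂ) 1, ‖T f z‖ ^ 2)
    (Cφ : F →L[ℂ] F)
    (hCφ : ∀ (f : F), ∀ z ∈ ball (0:ℂ) 1, T (Cφ f) z = T f (a * (z - c) + c)) :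
    (∀ n : ℕ, ∃ en : F, (∀ z ∈ ball (0:ℂ) 1, T en z = (z - c) ^ n) ∧
        Cφ en = (a ^ n : ℂ) • en) ∧
    (∀ μ : ℂ, (∃ f : F, f ≠ 0 ∧ Cφ f = μ • f) ↔ ∃ n : ℕ, μ = a ^ n) ∧
    (∀ (μ : ℂ) (f g : F), f ≠ 0 → g ≠ 0 → Cφ f = μ • f → Cφ g = μ • g →
      ∃ cst : ℂ, f = cst • g) := by
  have hcn : ‖c‖ < 1 := by simpa [mem_ball, dist_eq_norm] using hc
  -- φ maps the ball into itself
  have hφmem : ∀ z ∈ ball (0:ℂ) 1, a * (z - c) + c ∈ ball (0:ℂ) 1 := by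
    intro z hz
    have hzn : ‖z‖ < 1 := by simpa [mem_ball, dist_eq_norm] using hz
    simp only [mem_ball, dist_eq_norm, sub_zero]
    have h1 : a * (z - c) + c = a * z + (1 - a) * c := by ring
    rw [h1]
    calc ‖a * z + (1 - a) * c‖ ≤ ‖a * z‖ + ‖(1 - a) * c‖ := norm_add_le _ _
      _ = ‖a‖ * ‖z‖ + ‖1 - a‖ * ‖c‖ := by rw [norm_mul, norm_mul]
      _ < ‖a‖ * 1 + ‖1 - a‖ * ‖c‖ := by
          have := mul_lt_mul_of_pos_left hzn ha0
          linarith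
      _ ≤ 1 := by linarith
  -- eigenvectors
  have part1 : ∀ n : ℕ, ∃ en : F, (∀ z ∈ ball (0:ℂ) 1, T en z = (z - c) ^ n) ∧
      Cφ en = (a ^ n : ℂ) • en := by
    intro n
    have hB : (fun z : ℂ => (z - c) ^ n) ∈ BergmanSpace := by
      constructor
      · exact ((differentiable_id.sub_const c).pow n).differentiableOn
      · exact ((Continuous.continuousOn (by fun_prop)).integrableOn_compact
          (isCompact_closedBall 0 1)).mono_set ball_subset_closedBall
    obtain ⟨en, hen⟩ := hsur _ hB
    refine ⟨en, hen, ?_⟩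
    apply hinj
    intro z hz
    rw [hCφ en z hz, hen _ (hφmem z hz)]
    have : T ((a ^ n : ℂ) • en) z = (a ^ n : ℂ) * T en z := by
      rw [T.map_smul]; simp
    rw [this, hen z hz, add_sub_cancel_right, mul_pow]
  -- a convenient nonzero point in the ball different from c
  have hz₀ : ∃ z₀ ∈ ball (0:ℂ) 1, z₀ ≠ c := by
    set r : ℝ := (1 - ‖c‖)/2 with hr
    have hrpos : 0 < r := by rw [hr]; linarith
    refine ⟨c + (r : ℂ), ?_, ?_⟩
    · simp only [mem_ball, dist_eq_norm, sub_zero]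
      have h1 : ‖c + (r : ℂ)‖ ≤ ‖c‖ + ‖(r : ℂ)‖ := norm_add_le _ _
      have h2 : ‖(r : ℂ)‖ = r := by rw [Complex.norm_real, Real.norm_eq_abs, abs_of_pos hrpos]
      rw [h2] at h1
      have : ‖c‖ + r < 1 := by rw [hr]; linarith
      linarith
    · intro h
      have h0 : (r : ℂ) = 0 := by
        have := add_eq_left.mp h
        exact this
      rw [Complex.ofReal_eq_zero] at h0
      linarith
  -- the key dichotomy for eigenvectors
  have keyf : ∀ (μ : ℂ) (f : F), f ≠ 0 → Cφ f = μ • f →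
      ∃ n : ℕ, μ = a^n ∧ ∃ C : ℂ, C ≠ 0 ∧ ∀ z ∈ ball (0:ℂ) 1, T f z = C * (z-c)^n := by
    intro μ f hf0 hf
    have hG : DifferentiableOn ℂ (T f) (ball 0 1) := (hmem f).1
    have heq : ∀ z ∈ ball (0:ℂ) 1, T f (a*(z-c)+c) = μ * T f z := by
      intro z hz
      rw [← hCφ f z hz, hf, T.map_smul]
      simp
    have hne : ∃ z ∈ ball (0:ℂ) 1, T f z ≠ 0 := by
      by_contra h
      push_neg at h
      apply hf0
      apply hinj
      intro z hz
      rw [h z hz, map_zero]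
      simp
    exact key_lemma a c μ hc ha0 ha1 (T f) hG heq hne
  refine ⟨part1, ?_, ?_⟩
  · intro μ
    constructor
    · rintro ⟨f, hf0, hf⟩
      obtain ⟨n, hμ, _⟩ := keyf μ f hf0 hf
      exact ⟨n, hμ⟩
    · rintro ⟨n, rfl⟩
      obtain ⟨en, hen, heig⟩ := part1 n
      refine ⟨en, ?_, heig⟩
      intro h
      obtain ⟨z₀, hz₀b, hz₀c⟩ := hz₀
      have := hen z₀ hz₀b
      rw [h, map_zero] at this
      have h3 : ((z₀ - c) ^ n : ℂ) = 0 := by simpa using this.symm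
      have h4 : z₀ - c = 0 := (pow_eq_zero_iff'.mp h3).1
      exact hz₀c (sub_eq_zero.mp h4)
  · intro μ f g hf0 hg0 hf hg
    obtain ⟨n, hμn, Cf, hCf, hfrep⟩ := keyf μ f hf0 hf
    obtain ⟨m, hμm, Cg, hCg, hgrep⟩ := keyf μ g hg0 hg
    have hnm : n = m := by
      have h : ‖a‖^n = ‖a‖^m := by
        rw [← norm_pow, ← norm_pow, ← hμn, ← hμm]
      exact (pow_right_strictAnti₀ ha0 ha1).injective h
    subst hnm
    refine ⟨Cf / Cg, ?_⟩
    apply hinj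
    intro z hz
    rw [hfrep z hz, T.map_smul]
    simp only [Pi.smul_apply, smul_eq_mul]
    rw [hgrep z hz]
    field_simp
end

section
/- Let φ(z) = (z + r)/(1 + r z) with 0 < r < 1 (a hyperbolic automorphism of 𝔻 fixing ±1), and set R = (1+r)/(1−r). For every w ∈ ℂ with R^{−1/2} < |R^w| < R^{1/2} (equivalently Re(w) ∈ (−1/2, 1/2)), the function e_w(z) = ((1+z)/(1−z))^w lies in the Bergman space L²_a(𝔻) and satisfies C_φ e_w = R^w e_w. -/
open MeasureTheory Metric

/-- cpow of a positive real multiple. -/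
lemma ofReal_mul_cpow' (r : ℝ) (hr : 0 < r) (x : ℂ) (hx : x ≠ 0) (w : ℂ) :
    ((r : ℂ) * x) ^ w = (r : ℂ) ^ w * x ^ w := by
  have hr' : (r : ℂ) ≠ 0 := by exact_mod_cast hr.ne'
  rw [Complex.cpow_def_of_ne_zero (mul_ne_zero hr' hx),
    Complex.cpow_def_of_ne_zero hr', Complex.cpow_def_of_ne_zero hx,
    Complex.log_ofReal_mul hr hx, add_mul, Complex.exp_add,
    Complex.ofReal_log hr.le]

/-- `|t|^(-1/2)` is integrable on `(-2,2)`. -/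
lemma aux_int_1d : IntegrableOn (fun t : ℝ => |t| ^ (-(1/2) : ℝ)) (Set.Ioo (-2 : ℝ) 2) := by
  have h0 : IntegrableOn (fun t : ℝ => t ^ (-(1/2) : ℝ)) (Set.Ioc (0 : ℝ) 2) := by
    have := intervalIntegral.intervalIntegrable_rpow' (a := 0) (b := 2)
      (r := -(1/2)) (by norm_num)
    rwa [intervalIntegrable_iff_integrableOn_Ioc_of_le (by norm_num)] at this
  have hpos : IntegrableOn (fun t : ℝ => |t| ^ (-(1/2) : ℝ)) (Set.Ioc (0 : ℝ) 2) := by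
    refine h0.congr_fun (fun t ht => ?_) measurableSet_Ioc
    rw [abs_of_pos ht.1]
  have hneg : IntegrableOn (fun t : ℝ => |t| ^ (-(1/2) : ℝ)) (Set.Ico (-2 : ℝ) 0) := by
    have hmp := (Measure.measurePreserving_neg (volume : Measure ℝ))
    have hemb := (MeasurableEquiv.neg ℝ).measurableEmbedding
    have h := (hmp.integrableOn_comp_preimage hemb
      (f := fun t : ℝ => |t| ^ (-(1/2) : ℝ)) (s := Set.Ioc (0 : ℝ) 2)).2 hpos
    have hset : (Neg.neg ⁻¹' Set.Ioc (0 : ℝ) 2 : Set ℝ) = Set.Ico (-2 : ℝ) 0 := by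
      ext t
      simp only [Set.mem_preimage, Set.mem_Ioc, Set.mem_Ico]
      constructor
      · rintro ⟨h1, h2⟩; constructor <;> linarith
      · rintro ⟨h1, h2⟩; constructor <;> linarith
    rw [hset] at h
    exact h.congr_fun (fun t _ => by simp [Function.comp, abs_neg]) measurableSet_Ico
  have hsub : Set.Ioo (-2 : ℝ) 2 ⊆ Set.Ico (-2 : ℝ) 0 ∪ Set.Icc (0:ℝ) 2 := by
    intro t ht
    rcases lt_trichotomy t 0 with h | h | h
    · exact Or.inl ⟨ht.1.le, h⟩
    · exact Or.inr ⟨le_of_eq h.symm, ht.2.le⟩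
    · exact Or.inr ⟨h.le, ht.2.le⟩
  have hIcc : IntegrableOn (fun t : ℝ => |t| ^ (-(1/2) : ℝ)) (Set.Icc (0:ℝ) 2) := by
    rwa [integrableOn_Icc_iff_integrableOn_Ioc]
  exact IntegrableOn.mono_set (hneg.union hIcc) hsub

/-- `‖z‖⁻¹` is integrable on `ball 0 2` in `ℂ`. -/
lemma aux_int_ball2 : IntegrableOn (fun z : ℂ => ‖z‖⁻¹) (ball (0 : ℂ) 2) := by
  have hF : IntegrableOn
      (fun p : ℝ × ℝ => |p.1| ^ (-(1/2) : ℝ) * |p.2| ^ (-(1/2) : ℝ))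
      (Set.Ioo (-2 : ℝ) 2 ×ˢ Set.Ioo (-2 : ℝ) 2) := by
    have := aux_int_1d.mul_prod aux_int_1d
    rwa [IntegrableOn, Measure.volume_eq_prod, ← Measure.prod_restrict]
  have hmp := Complex.volume_preserving_equiv_real_prod
  have hemb := Complex.measurableEquivRealProd.measurableEmbedding
  have hFc := (hmp.integrableOn_comp_preimage hemb
    (f := fun p : ℝ × ℝ => |p.1| ^ (-(1/2) : ℝ) * |p.2| ^ (-(1/2) : ℝ))
    (s := Set.Ioo (-2 : ℝ) 2 ×ˢ Set.Ioo (-2 : ℝ) 2)).2 hF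
  have hsub : ball (0 : ℂ) 2 ⊆
      Complex.measurableEquivRealProd ⁻¹' (Set.Ioo (-2 : ℝ) 2 ×ˢ Set.Ioo (-2 : ℝ) 2) := by
    intro z hz
    rw [mem_ball_zero_iff] at hz
    have h1 : |z.re| < 2 := lt_of_le_of_lt (Complex.abs_re_le_norm z) hz
    have h2 : |z.im| < 2 := lt_of_le_of_lt (Complex.abs_im_le_norm z) hz
    rw [abs_lt] at h1 h2
    exact ⟨⟨h1.1, h1.2⟩, ⟨h2.1, h2.2⟩⟩
  have hB : IntegrableOn
      (fun z : ℂ => |z.re| ^ (-(1/2) : ℝ) * |z.im| ^ (-(1/2) : ℝ)) (ball (0 : ℂ) 2) :=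
    hFc.mono_set hsub
  have hre0 : (volume : Measure ℂ) {z : ℂ | z.re = 0} = 0 := by
    have hs : {z : ℂ | z.re = 0} =
        Complex.measurableEquivRealProd ⁻¹' ({(0:ℝ)} ×ˢ (Set.univ : Set ℝ)) := by
      ext z; simp [Complex.measurableEquivRealProd_apply, eq_comm]
    rw [hs, hmp.measure_preimage (((measurableSet_singleton (0:ℝ)).prod
      MeasurableSet.univ).nullMeasurableSet), Measure.volume_eq_prod, Measure.prod_prod]
    simp
  have him0 : (volume : Measure ℂ) {z : ℂ | z.im = 0} = 0 := by
    have hs : {z : ℂ | z.im = 0} =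
        Complex.measurableEquivRealProd ⁻¹' ((Set.univ : Set ℝ) ×ˢ {(0:ℝ)}) := by
      ext z; simp [Complex.measurableEquivRealProd_apply, eq_comm]
    rw [hs, hmp.measure_preimage ((MeasurableSet.univ.prod
      (measurableSet_singleton (0:ℝ))).nullMeasurableSet), Measure.volume_eq_prod,
      Measure.prod_prod]
    simp
  refine hB.mono' (measurable_norm.inv).aestronglyMeasurable ?_
  refine ae_restrict_of_ae ?_
  have h1 : ∀ᵐ z : ℂ ∂(volume : Measure ℂ), z.re ≠ 0 := by
    rw [ae_iff]; simp only [ne_eq, not_not]; exact hre0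
  have h2 : ∀ᵐ z : ℂ ∂(volume : Measure ℂ), z.im ≠ 0 := by
    rw [ae_iff]; simp only [ne_eq, not_not]; exact him0
  filter_upwards [h1, h2] with z hx hy
  have hx' : 0 < |z.re| := abs_pos.2 hx
  have hy' : 0 < |z.im| := abs_pos.2 hy
  have hxy : 0 < |z.re| * |z.im| := mul_pos hx' hy'
  have hsqrt : Real.sqrt (|z.re| * |z.im|) ≤ ‖z‖ := by
    rw [Complex.norm_def, Complex.normSq_apply]
    apply Real.sqrt_le_sqrt
    nlinarith [abs_nonneg z.re, abs_nonneg z.im, sq_abs z.re, sq_abs z.im,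
      sq_nonneg (|z.re| - |z.im|)]
  have hsqrtpos : 0 < Real.sqrt (|z.re| * |z.im|) := Real.sqrt_pos.2 hxy
  have hb : ‖z‖⁻¹ ≤ (Real.sqrt (|z.re| * |z.im|))⁻¹ :=
    inv_anti₀ hsqrtpos hsqrt
  have heq : |z.re| ^ (-(1/2) : ℝ) * |z.im| ^ (-(1/2) : ℝ)
      = (Real.sqrt (|z.re| * |z.im|))⁻¹ := by
    rw [← Real.mul_rpow (abs_nonneg _) (abs_nonneg _), Real.rpow_neg hxy.le,
      Real.sqrt_eq_rpow]
  rw [heq]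
  calc ‖(‖z‖⁻¹)‖ = ‖z‖⁻¹ := by
        rw [Real.norm_eq_abs, abs_of_nonneg (inv_nonneg.2 (norm_nonneg z))]
    _ ≤ (Real.sqrt (|z.re| * |z.im|))⁻¹ := hb

/-- `‖z - c‖⁻¹` is integrable on `ball 0 1` when `‖c‖ ≤ 1`. -/
lemma aux_int_shift (c : ℂ) (hc : ‖c‖ ≤ 1) :
    IntegrableOn (fun z : ℂ => ‖z - c‖⁻¹) (ball (0 : ℂ) 1) := by
  have hmp : MeasurePreserving (fun z : ℂ => z - c) volume volume :=
    measurePreserving_sub_right volume c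
  have hemb : MeasurableEmbedding (fun z : ℂ => z - c) :=
    (MeasurableEquiv.subRight c).measurableEmbedding
  have h := (hmp.integrableOn_comp_preimage hemb
    (f := fun z : ℂ => ‖z‖⁻¹) (s := ball (0 : ℂ) 2)).2 aux_int_ball2
  have hsub : ball (0 : ℂ) 1 ⊆ (fun z : ℂ => z - c) ⁻¹' ball (0 : ℂ) 2 := by
    intro z hz
    rw [mem_ball_zero_iff] at hz
    simp only [Set.mem_preimage, mem_ball_zero_iff]
    calc ‖z - c‖ ≤ ‖z‖ + ‖c‖ := norm_sub_le z c
      _ < 2 := by linarith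
  exact (h.mono_set hsub)

/-- The real part of `(1+z)/(1-z)` is positive on the unit ball. -/
lemma aux_re_pos {z : ℂ} (hz : z ∈ ball (0:ℂ) 1) : 0 < ((1 + z) / (1 - z)).re := by
  rw [mem_ball_zero_iff] at hz
  have hz' : ‖z‖ < 1 := hz
  have hz2 : Complex.normSq z < 1 := by
    rw [← Complex.sq_norm]; nlinarith [norm_nonneg z]
  have hzne : (1 : ℂ) - z ≠ 0 := by
    intro h
    have : z = 1 := by linear_combination -h
    rw [this] at hz; norm_num at hz
  have hns : 0 < Complex.normSq (1 - z) := Complex.normSq_pos.2 hzne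
  have hnum : (1 + z).re * (1 - z).re + (1 + z).im * (1 - z).im
      = 1 - Complex.normSq z := by
    simp [Complex.normSq_apply]; ring
  rw [Complex.div_re, ← add_div, hnum]
  exact div_pos (by linarith) hns

lemma aux_one_sub_ne {z : ℂ} (hz : z ∈ ball (0:ℂ) 1) : (1 : ℂ) - z ≠ 0 := by
  rw [mem_ball_zero_iff] at hz
  intro h
  have : z = 1 := by linear_combination -h
  rw [this] at hz; norm_num at hz

lemma aux_one_add_ne {z : ℂ} (hz : z ∈ ball (0:ℂ) 1) : (1 : ℂ) + z ≠ 0 := by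
  rw [mem_ball_zero_iff] at hz
  intro h
  have : z = -1 := by linear_combination h
  rw [this] at hz; norm_num at hz

/-- For the hyperbolic automorphism `φ(z) = (z+r)/(1+rz)`, `0 < r < 1`, with
`R = (1+r)/(1-r)`, and `Re w ∈ (-1/2, 1/2)`, the function
`e_w(z) = ((1+z)/(1-z))^w` lies in the Bergman space and satisfies
`e_w ∘ φ = R^w e_w`. -/
theorem stmt16 (r : ℝ) (hr0 : 0 < r) (hr1 : r < 1) (w : ℂ)
    (hw1 : -(1 / 2 : ℝ) < w.re) (hw2 : w.re < (1 / 2 : ℝ)) :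
    (fun z : ℂ => ((1 + z) / (1 - z)) ^ w) ∈ BergmanSpace ∧
    ∀ z ∈ ball (0:ℂ) 1,
      ((1 + (z + (r : ℂ)) / (1 + (r : ℂ) * z)) /
        (1 - (z + (r : ℂ)) / (1 + (r : ℂ) * z))) ^ w
        = ((((1 + r) / (1 - r) : ℝ)) : ℂ) ^ w * ((1 + z) / (1 - z)) ^ w := by
  have hdiff : DifferentiableOn ℂ (fun z : ℂ => ((1 + z) / (1 - z)) ^ w) (ball 0 1) := by
    intro z hz
    have h1 : DifferentiableAt ℂ (fun z : ℂ => (1 + z) / (1 - z)) z := by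
      apply DifferentiableAt.div
      · exact (differentiable_const (1:ℂ)).differentiableAt.add differentiable_id.differentiableAt
      · exact (differentiable_const (1:ℂ)).differentiableAt.sub differentiable_id.differentiableAt
      · exact aux_one_sub_ne hz
    exact (h1.cpow (differentiableAt_const w)
      (Or.inl (aux_re_pos hz))).differentiableWithinAt
  constructor
  · refine ⟨hdiff, ?_⟩
    set E := Real.exp (Real.pi * |w.im|) with hE
    have hEpos : 0 < E := Real.exp_pos _
    -- the dominating function
    have hBint : IntegrableOn
        (fun z : ℂ => E ^ 2 * (6 * ‖z - 1‖⁻¹ + 2 * ‖z - (-1)‖⁻¹)) (ball (0:ℂ) 1) := by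
      apply Integrable.const_mul
      exact ((aux_int_shift 1 (by norm_num)).const_mul 6).add
        ((aux_int_shift (-1) (by norm_num)).const_mul 2)
    refine hBint.mono' ?_ ?_
    · apply ContinuousOn.aestronglyMeasurable ?_ measurableSet_ball
      exact ((hdiff.continuousOn).norm).pow 2
    · rw [ae_restrict_iff' measurableSet_ball]
      refine ae_of_all _ (fun z hz => ?_)
      have hzn := mem_ball_zero_iff.1 hz
      have h1s : (1:ℂ) - z ≠ 0 := aux_one_sub_ne hz
      have h1a : (1:ℂ) + z ≠ 0 := aux_one_add_ne hz
      set u : ℂ := (1 + z) / (1 - z) with hu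
      have hune : u ≠ 0 := div_ne_zero h1a h1s
      set x : ℝ := ‖u‖ with hx
      have hxpos : 0 < x := norm_pos_iff.mpr hune
      -- bound the norm of the power
      have hnorm : ‖u ^ w‖ = x ^ w.re / Real.exp (Complex.arg u * w.im) := by
        exact Complex.norm_cpow_of_ne_zero hune w
      have hnorm2 : ‖u ^ w‖ ≤ x ^ w.re * E := by
        rw [hnorm, div_eq_mul_inv]
        exact mul_le_mul_of_nonneg_left (by rw [← Real.exp_neg]; exact
          (Real.exp_le_exp.2 (by
            calc -(Complex.arg u * w.im) ≤ |Complex.arg u * w.im| := neg_le_abs _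
              _ = |Complex.arg u| * |w.im| := abs_mul _ _
              _ ≤ Real.pi * |w.im| :=
                  mul_le_mul_of_nonneg_right (Complex.abs_arg_le_pi u) (abs_nonneg _))))
          (Real.rpow_nonneg hxpos.le _)
      have hxw : x ^ w.re ≤ x ^ ((1:ℝ)/2) + x ^ (-(1:ℝ)/2) := by
        rcases le_or_gt 1 x with h | h
        · calc x ^ w.re ≤ x ^ ((1:ℝ)/2) :=
                Real.rpow_le_rpow_of_exponent_le h (by linarith)
            _ ≤ x ^ ((1:ℝ)/2) + x ^ (-(1:ℝ)/2) := by
                have := Real.rpow_nonneg hxpos.le (-(1:ℝ)/2); linarith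
        · calc x ^ w.re ≤ x ^ (-(1:ℝ)/2) :=
                Real.rpow_le_rpow_of_exponent_ge hxpos h.le (by linarith)
            _ ≤ x ^ ((1:ℝ)/2) + x ^ (-(1:ℝ)/2) := by
                have := Real.rpow_nonneg hxpos.le ((1:ℝ)/2); linarith
      have hhalf : x ^ ((1:ℝ)/2) * x ^ ((1:ℝ)/2) = x := by
        rw [← Real.rpow_add hxpos]; norm_num
      have hnhalf : x ^ (-(1:ℝ)/2) * x ^ (-(1:ℝ)/2) = x⁻¹ := by
        rw [← Real.rpow_add hxpos]; norm_num [Real.rpow_neg_one]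
      have hcross : x ^ ((1:ℝ)/2) * x ^ (-(1:ℝ)/2) = 1 := by
        rw [← Real.rpow_add hxpos]; norm_num
      have hsq : (x ^ ((1:ℝ)/2) + x ^ (-(1:ℝ)/2)) ^ 2 = x + 2 + x⁻¹ := by
        have hexpand : (x ^ ((1:ℝ)/2) + x ^ (-(1:ℝ)/2)) ^ 2
            = x ^ ((1:ℝ)/2) * x ^ ((1:ℝ)/2) + 2 * (x ^ ((1:ℝ)/2) * x ^ (-(1:ℝ)/2))
              + x ^ (-(1:ℝ)/2) * x ^ (-(1:ℝ)/2) := by ring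
        rw [hexpand, hhalf, hnhalf, hcross]; ring
      -- geometric bounds
      have habs1 : ‖1 + z‖ ≤ 2 := by
        calc ‖1 + z‖ ≤ ‖(1:ℂ)‖ + ‖z‖ := norm_add_le _ _
          _ ≤ 2 := by rw [norm_one]; linarith
      have habs2 : ‖1 - z‖ ≤ 2 := by
        calc ‖1 - z‖ ≤ ‖(1:ℂ)‖ + ‖z‖ := norm_sub_le _ _
          _ ≤ 2 := by rw [norm_one]; linarith
      have habs1p : 0 < ‖1 + z‖ := norm_pos_iff.mpr h1a
      have habs2p : 0 < ‖1 - z‖ := norm_pos_iff.mpr h1s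
      have hxval : x = ‖1 + z‖ / ‖1 - z‖ := by
        rw [hx, hu, norm_div]
      have hn1 : ‖z - 1‖ = ‖1 - z‖ := by
        rw [norm_sub_rev]
      have hn2 : ‖z - (-1)‖ = ‖1 + z‖ := by
        rw [sub_neg_eq_add, add_comm]
      have hb1 : x ≤ 2 * ‖z - 1‖⁻¹ := by
        rw [hxval, hn1, div_eq_mul_inv]
        exact mul_le_mul_of_nonneg_right habs1 (inv_nonneg.2 habs2p.le)
      have hb2 : x⁻¹ ≤ 2 * ‖z - (-1)‖⁻¹ := by
        rw [hxval, inv_div, hn2, div_eq_mul_inv]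
        exact mul_le_mul_of_nonneg_right habs2 (inv_nonneg.2 habs1p.le)
      have hb3 : (2:ℝ) ≤ 4 * ‖z - 1‖⁻¹ := by
        have hpos : (0:ℝ) < ‖z - 1‖ := by rw [hn1]; exact habs2p
        have hle : ‖z - 1‖ ≤ 2 := by rw [hn1]; exact habs2
        have h5 := inv_anti₀ hpos hle
        linarith
      -- put everything together
      have hfinal : ‖u ^ w‖ ^ 2 ≤ E ^ 2 * (6 * ‖z - 1‖⁻¹ + 2 * ‖z - (-1)‖⁻¹) := by
        have h1 : ‖u ^ w‖ ^ 2 ≤ (x ^ w.re * E) ^ 2 := by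
          apply pow_le_pow_left₀ (norm_nonneg _) hnorm2 2
        have h2 : (x ^ w.re * E) ^ 2 ≤ ((x ^ ((1:ℝ)/2) + x ^ (-(1:ℝ)/2)) * E) ^ 2 := by
          apply pow_le_pow_left₀ (by positivity) (n := 2)
          exact mul_le_mul_of_nonneg_right hxw hEpos.le
        have h3 : ((x ^ ((1:ℝ)/2) + x ^ (-(1:ℝ)/2)) * E) ^ 2
            = E ^ 2 * (x + 2 + x⁻¹) := by
          rw [mul_pow, hsq]; ring
        have h4 : x + 2 + x⁻¹ ≤ 6 * ‖z - 1‖⁻¹ + 2 * ‖z - (-1)‖⁻¹ := by linarith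
        calc ‖u ^ w‖ ^ 2 ≤ ((x ^ ((1:ℝ)/2) + x ^ (-(1:ℝ)/2)) * E) ^ 2 := le_trans h1 h2
          _ = E ^ 2 * (x + 2 + x⁻¹) := h3
          _ ≤ E ^ 2 * (6 * ‖z - 1‖⁻¹ + 2 * ‖z - (-1)‖⁻¹) :=
              mul_le_mul_of_nonneg_left h4 (by positivity)
      calc ‖(‖u ^ w‖ ^ 2)‖ = ‖u ^ w‖ ^ 2 := by
            rw [Real.norm_eq_abs, abs_of_nonneg (by positivity)]
        _ ≤ E ^ 2 * (6 * ‖z - 1‖⁻¹ + 2 * ‖z - (-1)‖⁻¹) := hfinal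
  · intro z hz
    have hzn := mem_ball_zero_iff.1 hz
    have h1s : (1:ℂ) - z ≠ 0 := aux_one_sub_ne hz
    have h1a : (1:ℂ) + z ≠ 0 := aux_one_add_ne hz
    have hden : (1:ℂ) + (r:ℂ) * z ≠ 0 := by
      intro h
      have h1 : ‖(r:ℂ) * z‖ = r * ‖z‖ := by
        rw [norm_mul, Complex.norm_real, Real.norm_eq_abs, abs_of_pos hr0]
      have h2 : (r:ℂ) * z = -1 := by linear_combination h
      rw [h2] at h1
      simp at h1
      nlinarith [norm_nonneg z, mul_lt_mul_of_pos_left hzn hr0]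
    have hr1' : (1:ℝ) - r ≠ 0 := by linarith
    have hr1c : (1:ℂ) - (r:ℂ) ≠ 0 := by
      intro h
      apply hr1'
      have := congrArg Complex.re h
      simpa using this
    have hRpos : (0:ℝ) < (1 + r) / (1 - r) := by
      apply div_pos <;> linarith
    have hbase : (1 + (z + (r : ℂ)) / (1 + (r : ℂ) * z)) /
        (1 - (z + (r : ℂ)) / (1 + (r : ℂ) * z))
        = ((((1 + r) / (1 - r) : ℝ)) : ℂ) * ((1 + z) / (1 - z)) := by
      have hfac : (1:ℂ) - (r:ℂ) + ((r:ℂ) * z - z) ≠ 0 := by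
        have he : (1:ℂ) - (r:ℂ) + ((r:ℂ) * z - z) = (1 - (r:ℂ)) * (1 - z) := by ring
        rw [he]; exact mul_ne_zero hr1c h1s
      push_cast
      have e1 : (1:ℂ) + (z + (r:ℂ)) / (1 + (r:ℂ) * z) = ((1 + (r:ℂ)) * (1 + z)) / (1 + (r:ℂ) * z) := by
        rw [eq_div_iff hden, add_mul, div_mul_cancel₀ _ hden]; ring
      have e2 : (1:ℂ) - (z + (r:ℂ)) / (1 + (r:ℂ) * z) = ((1 - (r:ℂ)) * (1 - z)) / (1 + (r:ℂ) * z) := by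
        rw [eq_div_iff hden, sub_mul, div_mul_cancel₀ _ hden]; ring
      rw [e1, e2, div_div_div_cancel_right₀ hden, mul_div_mul_comm]
    rw [hbase]
    exact ofReal_mul_cpow' _ hRpos _ (div_ne_zero h1a h1s) w
end

section
/- Let φ(z) = ((2−a)z + a)/(−a z + 2 + a) with a ∈ ℂ, Re(a) = 0, a ≠ 0 (a parabolic automorphism of 𝔻 fixing 1). For every t ≥ 0 the function e_t(z) = exp(−t (1+z)/(1−z)) lies in the Bergman space L²_a(𝔻), is bounded on 𝔻, and satisfies C_φ e_t = e^{−a t} e_t; in particular every eigenvalue e^{−at} is unimodular. -/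
open MeasureTheory Metric

lemma aux_normSq_lt {z : ℂ} (hz : z ∈ ball (0:ℂ) 1) : Complex.normSq z < 1 := by
  rw [mem_ball, dist_zero_right] at hz
  have h1 : Complex.normSq z = ‖z‖ ^ 2 := by
    rw [Complex.normSq_eq_norm_sq]
  nlinarith [norm_nonneg z]

lemma aux_re_nonpos {z : ℂ} (hz : z ∈ ball (0:ℂ) 1) (t : ℝ) (ht : 0 ≤ t) :
    (-(t : ℂ) * (1 + z) / (1 - z)).re ≤ 0 := by
  have h := aux_normSq_lt hz
  have h0 : 0 ≤ Complex.normSq (1 - z) := Complex.normSq_nonneg _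
  rw [Complex.div_re]
  simp only [Complex.mul_re, Complex.mul_im, Complex.neg_re, Complex.neg_im,
    Complex.ofReal_re, Complex.ofReal_im, Complex.add_re, Complex.add_im,
    Complex.sub_re, Complex.sub_im, Complex.one_re, Complex.one_im,
    Complex.normSq_apply]
  rw [← add_div]
  apply div_nonpos_of_nonpos_of_nonneg _ (by simpa [Complex.normSq_apply] using h0)
  simp only [Complex.normSq_apply] at h
  nlinarith

lemma aux_norm_le {z : ℂ} (hz : z ∈ ball (0:ℂ) 1) (t : ℝ) (ht : 0 ≤ t) :
    ‖Complex.exp (-(t : ℂ) * (1 + z) / (1 - z))‖ ≤ 1 := by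
  rw [Complex.norm_exp]
  exact Real.exp_le_one_iff.mpr (aux_re_nonpos hz t ht)

/-- For the parabolic automorphism `φ(z) = ((2-a)z + a)/(-az + 2 + a)` with
`Re a = 0`, `a ≠ 0`, and `t ≥ 0`, the function
`e_t(z) = exp(-t(1+z)/(1-z))` belongs to the Bergman space, is bounded by `1`
on the disk, and satisfies `e_t ∘ φ = e^{-at} e_t` with `|e^{-at}| = 1`. -/
theorem stmt19 (a : ℂ) (ha : a.re = 0) (ha0 : a ≠ 0) (t : ℝ) (ht : 0 ≤ t) :
    (fun z : ℂ => Complex.exp (-(t : ℂ) * (1 + z) / (1 - z))) ∈ BergmanSpace ∧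
    (∀ z ∈ ball (0:ℂ) 1, ‖Complex.exp (-(t : ℂ) * (1 + z) / (1 - z))‖ ≤ 1) ∧
    (∀ z ∈ ball (0:ℂ) 1,
      Complex.exp (-(t : ℂ) *
          (1 + ((2 - a) * z + a) / (-a * z + 2 + a)) /
          (1 - ((2 - a) * z + a) / (-a * z + 2 + a)))
        = Complex.exp (-a * t) * Complex.exp (-(t : ℂ) * (1 + z) / (1 - z))) ∧
    ‖Complex.exp (-a * t)‖ = 1 := by
  have hdiff : DifferentiableOn ℂ
      (fun z : ℂ => Complex.exp (-(t : ℂ) * (1 + z) / (1 - z))) (ball 0 1) := by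
    apply DifferentiableOn.cexp
    apply DifferentiableOn.div
    · exact (differentiable_const _ |>.mul (differentiable_const 1 |>.add differentiable_id)).differentiableOn
    · exact (differentiable_const 1 |>.sub differentiable_id).differentiableOn
    · intro z hz; exact aux_one_sub_ne hz
  refine ⟨⟨hdiff, ?_⟩, fun z hz => aux_norm_le hz t ht, ?_, ?_⟩
  · -- integrable
    have hmeas : AEStronglyMeasurable (fun z : ℂ => ‖Complex.exp (-(t : ℂ) * (1 + z) / (1 - z))‖ ^ 2)
        (volume.restrict (ball (0:ℂ) 1)) := by
      apply ContinuousOn.aestronglyMeasurable _ measurableSet_ball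
      exact ((hdiff.continuousOn.norm).pow 2)
    refine ⟨hmeas, HasFiniteIntegral.restrict_of_bounded (C := 1) measure_ball_lt_top ?_⟩
    filter_upwards [ae_restrict_mem measurableSet_ball] with z hz
    have := aux_norm_le hz t ht
    have h0 : (0:ℝ) ≤ ‖Complex.exp (-(t : ℂ) * (1 + z) / (1 - z))‖ := norm_nonneg _
    rw [Real.norm_eq_abs, abs_of_nonneg (by positivity)]
    nlinarith
  · intro z hz
    have hzn := aux_normSq_lt hz
    have hden : -a * z + 2 + a ≠ 0 := by
      intro h
      have haz : a * z = 2 + a := by linear_combination -h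
      have h1 : Complex.normSq (a * z) = Complex.normSq (2 + a) := by rw [haz]
      rw [Complex.normSq_mul] at h1
      have ha2 : 0 < Complex.normSq a := Complex.normSq_pos.mpr ha0
      have h2 : Complex.normSq (2 + a) = 4 + Complex.normSq a := by
        simp [Complex.normSq_apply, Complex.add_re, Complex.add_im, ha]
        ring
      nlinarith
    have h1z := aux_one_sub_ne hz
    have hphi : 1 - ((2 - a) * z + a) / (-a * z + 2 + a)
        = 2 * (1 - z) / (-a * z + 2 + a) := by
      rw [eq_div_iff hden, sub_mul, div_mul_cancel₀ _ hden]
      ring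
    have hphine : 1 - ((2 - a) * z + a) / (-a * z + 2 + a) ≠ 0 := by
      rw [hphi]
      apply div_ne_zero _ hden
      simpa using h1z
    have hphi2 : 1 + ((2 - a) * z + a) / (-a * z + 2 + a)
        = ((2 - 2 * a) * z + 2 + 2 * a) / (-a * z + 2 + a) := by
      rw [eq_div_iff hden, add_mul, div_mul_cancel₀ _ hden]
      ring
    have h2z : (2 : ℂ) * (1 - z) ≠ 0 := by
      simpa using h1z
    have hS : (1 + ((2 - a) * z + a) / (-a * z + 2 + a)) /
          (1 - ((2 - a) * z + a) / (-a * z + 2 + a))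
        = a + (1 + z) / (1 - z) := by
      have hx : (1 + z) / (1 - z) * (2 * (1 - z)) = (1 + z) * 2 := by
        rw [div_mul_eq_mul_div, mul_comm 2 (1 - z), mul_left_comm,
          mul_div_cancel_left₀ _ h1z]
      rw [hphi, hphi2, div_div_div_cancel_right₀ hden, div_eq_iff h2z, add_mul, hx]
      ring
    have key : -(t : ℂ) * (1 + ((2 - a) * z + a) / (-a * z + 2 + a)) /
          (1 - ((2 - a) * z + a) / (-a * z + 2 + a))
        = -a * t + -(t : ℂ) * (1 + z) / (1 - z) := by
      rw [mul_div_assoc, hS]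
      ring
    rw [key, Complex.exp_add]
  · rw [Complex.norm_exp]
    have : (-a * (t:ℂ)).re = 0 := by
      simp [Complex.mul_re, ha]
    rw [this, Real.exp_zero]
end
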